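/- For every λ ∈ a and every x in the closed positive Weyl chamber ā₊, the gradient of F_λ satisfies ∇F_λ(x) = −|W|^{−1} Σ_{w∈W} w^{−1}(ρ − λ) · G_λ(w x) (an identity of vectors in a). In particular |∇F_λ(x)| ≤ (|ρ| + |λ|) · F_λ(x). -/

import Mathlib

open scoped BigOperators RealInnerProductSpace Classical

noncomputable section

variable {E : Type*} [NormedAddCommGroup E] [InnerProductSpace ℝ E] [FiniteDimensional ℝ E]

/-- The coroot `α∨ = 2α/|α|²`. -/
def coroot (α : E) : E := (2 / ⟪α, α⟫) • α

/-- The orthogonal reflection `r_α x = x - (α∨, x) α`. -/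
def rRefl (α : E) (x : E) : E := x - ⟪coroot α, x⟫ • α

/-- Data of an integral root system with positive subsystem and
a Weyl-invariant positive multiplicity function. -/
structure HOData (E : Type*) [NormedAddCommGroup E] [InnerProductSpace ℝ E] : Type _ where
  R : Finset E
  Rpos : Finset E
  k : E → ℝ
  k_pos : ∀ α ∈ R, 0 < k α
  root_ne_zero : ∀ α ∈ R, α ≠ 0
  pos_subset : Rpos ⊆ R
  pos_char : ∃ u : E, ∀ α ∈ R, (α ∈ Rpos ↔ 0 < ⟪α, u⟫)
  pos_or_neg : ∀ α ∈ R, α ∈ Rpos ∨ -α ∈ Rpos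
  neg_mem : ∀ α ∈ R, -α ∈ R
  integral : ∀ α ∈ R, ∀ β ∈ R, ∃ n : ℤ, ⟪coroot α, β⟫ = (n : ℝ)
  refl_mem : ∀ α ∈ R, ∀ β ∈ R, rRefl α β ∈ R
  k_inv : ∀ α ∈ R, ∀ β ∈ R, k (rRefl α β) = k β

/-- The Weyl group: the subgroup of linear isometries generated by the root reflections. -/
def weylGroup (D : HOData E) : Subgroup (E ≃ₗᵢ[ℝ] E) :=
  Subgroup.closure {w : E ≃ₗᵢ[ℝ] E | ∃ α ∈ D.R, ∀ x, w x = rRefl α x}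

/-- `ρ = (1/2) Σ_{α ∈ R⁺} k_α α`. -/
def rhoHO (D : HOData E) : E := (2:ℝ)⁻¹ • ∑ α ∈ D.Rpos, D.k α • α

/-- Regular points. -/
def HORegular (D : HOData E) (x : E) : Prop := ∀ α ∈ D.R, ⟪α, x⟫ ≠ 0

/-- The (open) positive Weyl chamber. -/
def posChamber (D : HOData E) : Set E := {x | ∀ α ∈ D.Rpos, 0 < ⟪α, x⟫}

/-- The positive indivisible roots `R₀⁺`. -/
def Rpos0 (D : HOData E) : Finset E := D.Rpos.filter (fun α => (2:ℝ)⁻¹ • α ∉ D.R)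

/-- The Opdam function `G_λ` for a real parameter `λ`: an analytic function,
normalized at `0`, satisfying the Cherednik differential-difference system. -/
def IsOpdamR (D : HOData E) (lam : E) (G : E → ℝ) : Prop :=
  AnalyticOnNhd ℝ G Set.univ ∧ G 0 = 1 ∧
  ∀ ξ x, HORegular D x →
    fderiv ℝ G x ξ =
      (∑ α ∈ D.Rpos, D.k α * ⟪α, ξ⟫ / (1 - Real.exp (-⟪α, x⟫)) * (G (rRefl α x) - G x))
      + ⟪rhoHO D + lam, ξ⟫ * G x

/-- The Opdam function `G_λ` for a complex parameter `λ = l1 + i l2 ∈ h`. -/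
def IsOpdamC (D : HOData E) (l1 l2 : E) (G : E → ℂ) : Prop :=
  AnalyticOnNhd ℝ G Set.univ ∧ G 0 = 1 ∧
  ∀ ξ x, HORegular D x →
    fderiv ℝ G x ξ =
      (∑ α ∈ D.Rpos, ((D.k α * ⟪α, ξ⟫ / (1 - Real.exp (-⟪α, x⟫)) : ℝ) : ℂ)
          * (G (rRefl α x) - G x))
      + (((⟪rhoHO D + l1, ξ⟫ : ℝ) : ℂ) + Complex.I * ((⟪l2, ξ⟫ : ℝ) : ℂ)) * G x

/-- The symmetrization `F(x) = |W|⁻¹ Σ_{w ∈ W} G(w x)` (real valued case). -/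
def Fsym (D : HOData E) [Fintype (weylGroup D)] (G : E → ℝ) (x : E) : ℝ :=
  (Fintype.card (weylGroup D) : ℝ)⁻¹ * ∑ w : weylGroup D, G (w.1 x)

/-- The symmetrization `F(x) = |W|⁻¹ Σ_{w ∈ W} G(w x)` (complex valued case). -/
def FsymC (D : HOData E) [Fintype (weylGroup D)] (G : E → ℂ) (x : E) : ℂ :=
  (Fintype.card (weylGroup D) : ℂ)⁻¹ * ∑ w : weylGroup D, G (w.1 x)

/-- `max_{w ∈ W} (w λ, x)`. -/
def maxW (D : HOData E) [Fintype (weylGroup D)] (lam x : E) : ℝ :=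
  ⨆ w : weylGroup D, ⟪w.1 lam, x⟫


set_option linter.unusedSectionVars false
open scoped Topology


lemma inner_coroot (α x : E) : ⟪coroot α, x⟫ = 2 * ⟪α, x⟫ / ⟪α, α⟫ := by
  simp [coroot, real_inner_smul_left]; ring

def sIso (α : E) : E ≃ₗᵢ[ℝ] E := Submodule.reflection ((ℝ ∙ α)ᗮ)

lemma sIso_apply (α : E) (x : E) : sIso α x = rRefl α x := by
  have h := Submodule.starProjection_add_starProjection_orthogonal (K := ℝ ∙ α) x
  have h2 : ((ℝ ∙ α).starProjection x : E) = (⟪α, x⟫ / (‖α‖^2 : ℝ)) • α := by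
    simpa using Submodule.starProjection_singleton (𝕜 := ℝ) (v := α) x
  have h3 : ((ℝ ∙ α)ᗮ.starProjection x : E) = x - (⟪α, x⟫ / (‖α‖^2 : ℝ)) • α := by
    rw [← h2, eq_sub_iff_add_eq, add_comm]; exact h
  rw [sIso, Submodule.reflection_apply, h3, rRefl, inner_coroot, real_inner_self_eq_norm_sq]
  rcases eq_or_ne α 0 with rfl | hα
  · simp [two_smul]
  · have hn : (‖α‖^2 : ℝ) ≠ 0 := pow_ne_zero 2 (norm_ne_zero_iff.mpr hα)
    have : (2 * ⟪α, x⟫ / ‖α‖ ^ 2) • α = (⟪α,x⟫/‖α‖^2) • α + (⟪α,x⟫/‖α‖^2) • α := by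
      rw [← add_smul]; congr 1; field_simp; ring
    rw [this, two_smul]; abel

lemma rRefl_apply_self (α : E) (hα : α ≠ 0) : rRefl α α = -α := by
  rw [rRefl, inner_coroot]
  have hn : ⟪α,α⟫ ≠ 0 := inner_self_ne_zero.mpr hα
  rw [show 2 * ⟪α,α⟫ / ⟪α,α⟫ = 2 by field_simp]
  rw [two_smul]; abel

lemma inner_coroot_self (α : E) (hα : α ≠ 0) : ⟪coroot α, α⟫ = 2 := by
  rw [inner_coroot]; have hn : ⟪α,α⟫ ≠ 0 := inner_self_ne_zero.mpr hα; field_simp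

lemma rRefl_rRefl (α : E) (x : E) : rRefl α (rRefl α x) = x := by
  rcases eq_or_ne α 0 with rfl | hα
  · simp [rRefl, coroot]
  · rw [rRefl, rRefl]
    rw [show ⟪coroot α, x - ⟪coroot α, x⟫ • α⟫ = ⟪coroot α, x⟫ - ⟪coroot α, x⟫ * ⟪coroot α, α⟫ by
      rw [inner_sub_right, real_inner_smul_right]]
    rw [inner_coroot_self α hα]; ring_nf; module

lemma inner_rRefl (α u v : E) : ⟪rRefl α u, v⟫ = ⟪u, rRefl α v⟫ := by
  simp only [rRefl, inner_sub_left, inner_sub_right, real_inner_smul_left, real_inner_smul_right,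
    inner_coroot]
  rw [real_inner_comm u α]; ring

lemma sIso_mem (D : HOData E) {α : E} (hα : α ∈ D.R) : sIso α ∈ weylGroup D :=
  Subgroup.subset_closure ⟨α, hα, fun x => sIso_apply α x⟩

lemma weyl_maps_R (D : HOData E) {w : E ≃ₗᵢ[ℝ] E} (hw : w ∈ weylGroup D) :
    ∀ α ∈ D.R, w α ∈ D.R := by
  induction hw using Subgroup.closure_induction with
  | mem x hx => intro α hα; obtain ⟨β, hβ, hx⟩ := hx; rw [hx]; exact D.refl_mem β hβ α hα
  | one => intro α hα; simpa using hα
  | mul x y hx hy hx' hy' => intro α hα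
                             have := hx' _ (hy' α hα)
                             simpa using this
  | inv x hx hx' =>
    intro α hα
    have himg : D.R.image x ⊆ D.R := by
      intro β hβ; obtain ⟨γ, hγ, rfl⟩ := Finset.mem_image.mp hβ; exact hx' γ hγ
    have heq : D.R.image x = D.R := Finset.eq_of_subset_of_card_le himg
      (le_of_eq (Finset.card_image_of_injective _ x.injective).symm)
    rw [← heq] at hα
    obtain ⟨β, hβ, hβα⟩ := Finset.mem_image.mp hα
    have hxi : x⁻¹ α = β := by rw [← hβα]; exact x.symm_apply_apply β
    rw [hxi]; exact hβ

lemma weyl_regular (D : HOData E) {w : E ≃ₗᵢ[ℝ] E} (hw : w ∈ weylGroup D) {x : E}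
    (hx : HORegular D x) : HORegular D (w x) := by
  intro α hα
  have h2 : w.symm α ∈ D.R := by
    have := weyl_maps_R D (inv_mem hw) α hα
    simpa using this
  have h3 : ⟪α, w x⟫ = ⟪w.symm α, x⟫ := by
    conv_lhs => rw [← w.apply_symm_apply α]
    exact w.inner_map_map _ _
  rw [h3]; exact hx _ h2

lemma fderiv_Fsym_apply (D : HOData E) [Fintype (weylGroup D)] (G : E → ℝ)
    (hdG : Differentiable ℝ G) (x ξ : E) :
    fderiv ℝ (Fsym D G) x ξ
      = (Fintype.card (weylGroup D) : ℝ)⁻¹ * ∑ w : weylGroup D, fderiv ℝ G (w.1 x) (w.1 ξ) := by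
  have hw : ∀ w : weylGroup D, HasFDerivAt (fun y => G (w.1 y))
      ((fderiv ℝ G (w.1 x)).comp w.1.toLinearIsometry.toContinuousLinearMap) x := fun w =>
    ((hdG (w.1 x)).hasFDerivAt).comp x
      (w.1.toLinearIsometry.toContinuousLinearMap.hasFDerivAt)
  have hsum : HasFDerivAt (fun y => ∑ w : weylGroup D, G (w.1 y))
      (∑ w : weylGroup D, (fderiv ℝ G (w.1 x)).comp w.1.toLinearIsometry.toContinuousLinearMap)
      x := HasFDerivAt.fun_sum (fun w _ => hw w)
  have hF := hsum.const_mul ((Fintype.card (weylGroup D) : ℝ)⁻¹)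
  have : fderiv ℝ (Fsym D G) x = (Fintype.card (weylGroup D) : ℝ)⁻¹ •
      ∑ w : weylGroup D, (fderiv ℝ G (w.1 x)).comp w.1.toLinearIsometry.toContinuousLinearMap :=
    hF.fderiv
  rw [this]
  simp [ContinuousLinearMap.smul_apply, ContinuousLinearMap.sum_apply, Finset.mul_sum]

lemma contDiff_Fsym (D : HOData E) [Fintype (weylGroup D)] (G : E → ℝ)
    (hG : AnalyticOnNhd ℝ G Set.univ) : ContDiff ℝ 1 (Fsym D G) := by
  have hg : ContDiff ℝ 1 G := hG.contDiff
  have h1 : ContDiff ℝ 1 (fun x => ∑ w : weylGroup D, G (w.1 x)) := by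
    refine ContDiff.sum (fun w _ => ?_)
    exact hg.comp (w.1.toLinearIsometry.toContinuousLinearMap.contDiff)
  have := h1.const_smul ((Fintype.card (weylGroup D) : ℝ)⁻¹)
  exact this

lemma continuous_gradient_Fsym (D : HOData E) [Fintype (weylGroup D)] (G : E → ℝ)
    (hG : AnalyticOnNhd ℝ G Set.univ) : Continuous (fun x => gradient (Fsym D G) x) := by
  have h := (contDiff_Fsym D G hG).continuous_fderiv one_ne_zero
  exact (InnerProductSpace.toDual ℝ E).symm.continuous.comp h

lemma gradient_eq_of_inner (f : E → ℝ) (x v : E) (h : ∀ ξ, fderiv ℝ f x ξ = ⟪v, ξ⟫) :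
    gradient f x = v := by
  have : fderiv ℝ f x = InnerProductSpace.toDual ℝ E v := by
    ext ξ; rw [h ξ, InnerProductSpace.toDual_apply_apply]
  show (InnerProductSpace.toDual ℝ E).symm (fderiv ℝ f x) = v
  rw [this, LinearIsometryEquiv.symm_apply_apply]

lemma frac_add (t : ℝ) (ht : t ≠ 0) : 1/(1-Real.exp t) + 1/(1-Real.exp (-t)) = 1 := by
  have h1 : Real.exp t ≠ 1 := fun h => ht ((Real.exp_eq_one_iff t).mp h)
  have h3 : 1 - Real.exp t ≠ 0 := sub_ne_zero.mpr (Ne.symm h1)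
  have h5 : Real.exp (-t) = (Real.exp t)⁻¹ := Real.exp_neg t
  have h6 : Real.exp t ≠ 0 := Real.exp_ne_zero t
  rw [h5]
  have e1 : 1 - (Real.exp t)⁻¹ = (Real.exp t - 1)/(Real.exp t) := by field_simp
  have e2 : Real.exp t - 1 = -(1 - Real.exp t) := by ring
  rw [e1, one_div_div, e2, div_neg, ← sub_eq_add_neg, div_sub_div_same]
  exact div_self h3

lemma coeff_pos (σ s : ℝ) (hσ : σ ≠ 0) (hs : 0 < s) : 0 < σ / (1 - Real.exp (-(s*σ))) := by
  rcases lt_or_gt_of_ne hσ with h | h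
  · apply div_pos_of_neg_of_neg h
    have : 1 < Real.exp (-(s*σ)) := by rw [Real.one_lt_exp_iff]; nlinarith
    linarith
  · apply div_pos h
    have : Real.exp (-(s*σ)) < 1 := by rw [Real.exp_lt_one_iff]; nlinarith
    linarith

lemma one_sub_exp_ne (t : ℝ) (ht : t ≠ 0) : 1 - Real.exp (-t) ≠ 0 := by
  intro h
  have : Real.exp (-t) = 1 := by linarith
  exact ht (neg_eq_zero.mp ((Real.exp_eq_one_iff (-t)).mp this))

lemma exists_regular (D : HOData E) : ∃ u : E, HORegular D u := by
  obtain ⟨u, hu⟩ := D.pos_char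
  refine ⟨u, fun α hα => ?_⟩
  rcases D.pos_or_neg α hα with h | h
  · exact ne_of_gt ((hu α hα).mp h)
  · have h2 : 0 < ⟪-α, u⟫ := (hu (-α) (D.neg_mem α hα)).mp h
    rw [inner_neg_left] at h2
    linarith [h2]

lemma dense_regular (D : HOData E) : Dense {x : E | HORegular D x} := by
  obtain ⟨u, hu⟩ := exists_regular D
  intro x
  rw [Metric.mem_closure_iff]
  intro ε hε
  have hbad : ({t : ℝ | ∃ α ∈ D.R, ⟪α, x⟫ + t * ⟪α, u⟫ = 0}).Finite := by
    apply Set.Finite.subset (Set.finite_coe_iff.mp ?_ : (↑(D.R.image (fun α => -⟪α,x⟫ / ⟪α,u⟫)) : Set ℝ).Finite)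
    · rintro t ⟨α, hα, ht⟩
      simp only [Finset.coe_image, Set.mem_image, Finset.mem_coe]
      refine ⟨α, hα, ?_⟩
      have hαu : ⟪α, u⟫ ≠ 0 := hu α hα
      field_simp
      linarith
    · exact Set.finite_coe_iff.mpr (D.R.image _).finite_toSet
  have hio : (Set.Ioo (0:ℝ) (ε/(‖u‖+1))).Infinite := Set.Ioo_infinite (by positivity)
  obtain ⟨t, htI, htB⟩ := hio.exists_notMem_finite hbad
  refine ⟨x + t • u, ?_, ?_⟩
  · intro α hα
    rw [inner_add_right, real_inner_smul_right]
    intro h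
    exact htB ⟨α, hα, h⟩
  · rw [dist_self_add_right, norm_smul, Real.norm_eq_abs, abs_of_pos htI.1]
    calc t * ‖u‖ ≤ t * (‖u‖+1) := by nlinarith [htI.1]
    _ < ε/(‖u‖+1) * (‖u‖+1) := by
        apply mul_lt_mul_of_pos_right htI.2; positivity
    _ = ε := by field_simp

lemma inner_symm_weyl (w : E ≃ₗᵢ[ℝ] E) (a ξ : E) : ⟪a, w ξ⟫ = ⟪w.symm a, ξ⟫ := by
  conv_lhs => rw [← w.apply_symm_apply a]
  exact w.inner_map_map _ _

lemma fderiv_Fsym_regular (D : HOData E) [Fintype (weylGroup D)] (lam : E) (G : E → ℝ)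
    (hG : IsOpdamR D lam G) {x : E} (hx : HORegular D x) (ξ : E) :
    fderiv ℝ (Fsym D G) x ξ
      = ⟪(Fintype.card (weylGroup D) : ℝ)⁻¹ •
          ∑ w : weylGroup D, G (w.1 x) • (w.1.symm (lam - rhoHO D)), ξ⟫ := by
  have hdG : Differentiable ℝ G := (hG.1.contDiff (n := 1)).differentiable one_ne_zero
  rw [fderiv_Fsym_apply D G hdG x ξ]
  have heach : ∀ w : weylGroup D,
      fderiv ℝ G (w.1 x) (w.1 ξ)
        = (∑ α ∈ D.Rpos, D.k α * ⟪α, w.1 ξ⟫ / (1 - Real.exp (-⟪α, w.1 x⟫)) *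
            (G (rRefl α (w.1 x)) - G (w.1 x))) + ⟪rhoHO D + lam, w.1 ξ⟫ * G (w.1 x) :=
    fun w => hG.2.2 (w.1 ξ) (w.1 x) (weyl_regular D w.2 hx)
  have key : ∀ α ∈ D.Rpos,
      (∑ w : weylGroup D, D.k α * ⟪α, w.1 ξ⟫ / (1 - Real.exp (-⟪α, w.1 x⟫)) *
          (G (rRefl α (w.1 x)) - G (w.1 x)))
        = ∑ w : weylGroup D, (-(D.k α * ⟪α, w.1 ξ⟫)) * G (w.1 x) := by
    intro α hαp
    have hαR : α ∈ D.R := D.pos_subset hαp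
    have hα0 : α ≠ 0 := D.root_ne_zero α hαR
    set sE : weylGroup D := (⟨sIso α, sIso_mem D hαR⟩ : weylGroup D) with hsE
    have hmul : ∀ (w : weylGroup D) (v : E), (sE * w).1 v = rRefl α (w.1 v) := by
      intro w v
      show (sIso α) (w.1 v) = _
      exact sIso_apply α (w.1 v)
    have hinner : ∀ v : E, ⟪α, rRefl α v⟫ = -⟪α, v⟫ := by
      intro v
      rw [← inner_rRefl, rRefl_apply_self α hα0, inner_neg_left]
    have split : (∑ w : weylGroup D, D.k α * ⟪α, w.1 ξ⟫ / (1 - Real.exp (-⟪α, w.1 x⟫)) *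
        (G (rRefl α (w.1 x)) - G (w.1 x)))
        = (∑ w : weylGroup D,
            D.k α * ⟪α, w.1 ξ⟫ / (1 - Real.exp (-⟪α, w.1 x⟫)) * G (rRefl α (w.1 x)))
          - ∑ w : weylGroup D,
            D.k α * ⟪α, w.1 ξ⟫ / (1 - Real.exp (-⟪α, w.1 x⟫)) * G (w.1 x) := by
      rw [← Finset.sum_sub_distrib]
      apply Finset.sum_congr rfl
      intro w _
      ring
    have reidx : (∑ w : weylGroup D,
          D.k α * ⟪α, w.1 ξ⟫ / (1 - Real.exp (-⟪α, w.1 x⟫)) * G (rRefl α (w.1 x)))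
        = ∑ w : weylGroup D,
            D.k α * (-⟪α, w.1 ξ⟫) / (1 - Real.exp (⟪α, w.1 x⟫)) * G (w.1 x) := by
      rw [← Equiv.sum_comp (Equiv.mulLeft sE)
        (fun w : weylGroup D =>
          D.k α * ⟪α, w.1 ξ⟫ / (1 - Real.exp (-⟪α, w.1 x⟫)) * G (rRefl α (w.1 x)))]
      apply Finset.sum_congr rfl
      intro w _
      simp only [Equiv.coe_mulLeft]
      rw [hmul w ξ, hmul w x, hinner, hinner, neg_neg, rRefl_rRefl]
    rw [split, reidx, ← Finset.sum_sub_distrib]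
    apply Finset.sum_congr rfl
    intro w _
    have ht : ⟪α, w.1 x⟫ ≠ 0 := weyl_regular D w.2 hx α hαR
    have hfa := frac_add ⟪α, w.1 x⟫ ht
    have h1 : 1 - Real.exp ⟪α, w.1 x⟫ ≠ 0 := by
      have := one_sub_exp_ne (-⟪α, w.1 x⟫) (neg_ne_zero.mpr ht)
      rwa [neg_neg] at this
    have h2 : 1 - Real.exp (-⟪α, w.1 x⟫) ≠ 0 := one_sub_exp_ne _ ht
    linear_combination (-(D.k α * ⟪α, w.1 ξ⟫) * G (w.1 x)) * hfa
  have hrho : ∀ v : E, ∑ α ∈ D.Rpos, D.k α * ⟪α, v⟫ = 2 * ⟪rhoHO D, v⟫ := by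
    intro v
    rw [rhoHO, real_inner_smul_left, sum_inner]
    simp only [real_inner_smul_left]
    ring
  have hsum : (∑ w : weylGroup D, fderiv ℝ G (w.1 x) (w.1 ξ))
      = ∑ w : weylGroup D, ⟪lam - rhoHO D, w.1 ξ⟫ * G (w.1 x) := by
    calc (∑ w : weylGroup D, fderiv ℝ G (w.1 x) (w.1 ξ))
        = ∑ w : weylGroup D,
            ((∑ α ∈ D.Rpos, D.k α * ⟪α, w.1 ξ⟫ / (1 - Real.exp (-⟪α, w.1 x⟫)) *
              (G (rRefl α (w.1 x)) - G (w.1 x))) + ⟪rhoHO D + lam, w.1 ξ⟫ * G (w.1 x)) :=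
          Finset.sum_congr rfl (fun w _ => heach w)
      _ = (∑ w : weylGroup D, ∑ α ∈ D.Rpos, D.k α * ⟪α, w.1 ξ⟫ / (1 - Real.exp (-⟪α, w.1 x⟫)) *
              (G (rRefl α (w.1 x)) - G (w.1 x)))
          + ∑ w : weylGroup D, ⟪rhoHO D + lam, w.1 ξ⟫ * G (w.1 x) := Finset.sum_add_distrib
      _ = (∑ α ∈ D.Rpos, ∑ w : weylGroup D, D.k α * ⟪α, w.1 ξ⟫ / (1 - Real.exp (-⟪α, w.1 x⟫)) *
              (G (rRefl α (w.1 x)) - G (w.1 x)))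
          + ∑ w : weylGroup D, ⟪rhoHO D + lam, w.1 ξ⟫ * G (w.1 x) := by rw [Finset.sum_comm]
      _ = (∑ α ∈ D.Rpos, ∑ w : weylGroup D, (-(D.k α * ⟪α, w.1 ξ⟫)) * G (w.1 x))
          + ∑ w : weylGroup D, ⟪rhoHO D + lam, w.1 ξ⟫ * G (w.1 x) := by
            rw [Finset.sum_congr rfl key]
      _ = (∑ w : weylGroup D, ∑ α ∈ D.Rpos, (-(D.k α * ⟪α, w.1 ξ⟫)) * G (w.1 x))
          + ∑ w : weylGroup D, ⟪rhoHO D + lam, w.1 ξ⟫ * G (w.1 x) := by rw [Finset.sum_comm]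
      _ = ∑ w : weylGroup D, ((∑ α ∈ D.Rpos, (-(D.k α * ⟪α, w.1 ξ⟫))) * G (w.1 x)
          + ⟪rhoHO D + lam, w.1 ξ⟫ * G (w.1 x)) := by
            rw [← Finset.sum_add_distrib]
            apply Finset.sum_congr rfl
            intro w _
            rw [Finset.sum_mul]
      _ = ∑ w : weylGroup D, ⟪lam - rhoHO D, w.1 ξ⟫ * G (w.1 x) := by
            apply Finset.sum_congr rfl
            intro w _
            have h2 := hrho (w.1 ξ)
            rw [inner_sub_left, inner_add_left, Finset.sum_neg_distrib]
            linear_combination (-(G (w.1 x))) * h2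
  rw [hsum, real_inner_smul_left, sum_inner, Finset.mul_sum, Finset.mul_sum]
  apply Finset.sum_congr rfl
  intro w _
  rw [real_inner_smul_left, ← inner_symm_weyl w.1 (lam - rhoHO D) ξ]
  ring


lemma rRefl_smul (α : E) (s : ℝ) (v : E) : rRefl α (s • v) = s • rRefl α v := by
  simp [rRefl, real_inner_smul_right, smul_sub, smul_smul, mul_comm]

lemma G_pos_regular (D : HOData E) [Fintype (weylGroup D)] (lam : E) (G : E → ℝ)
    (hG : IsOpdamR D lam G) {y : E} (hy : HORegular D y) : 0 < G y := by
  classical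
  have hGc : Continuous G := (hG.1.contDiff (n := 1)).continuous
  have hdG : Differentiable ℝ G := (hG.1.contDiff (n := 1)).differentiable one_ne_zero
  have hyW : ∀ w : weylGroup D, HORegular D (w.1 y) := fun w => weyl_regular D w.2 hy
  set u : weylGroup D → ℝ → ℝ := fun w t => G (t • w.1 y) with hu
  have hcont : ∀ w, Continuous (u w) :=
    fun w => hGc.comp (continuous_id.smul continuous_const)
  have h0 : ∀ w, u w 0 = 1 := fun w => by simp [hu, hG.2.1]
  -- Step 1: find small positive ε where all u w are positive
  have hev : ∀ᶠ t in 𝓝 (0:ℝ), ∀ w : weylGroup D, 0 < u w t := by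
    rw [Filter.eventually_all]
    intro w
    have h1 : Filter.Tendsto (u w) (𝓝 0) (𝓝 1) := by
      rw [← h0 w]; exact (hcont w).continuousAt
    exact h1.eventually (eventually_gt_nhds one_pos)
  have hev2 : ∀ᶠ t in 𝓝 (0:ℝ), t < 1/2 := eventually_lt_nhds (by norm_num)
  have h3 : ∀ᶠ t in 𝓝[>] (0:ℝ), (∀ w : weylGroup D, 0 < u w t) ∧ t < 1/2 :=
    (hev.and hev2).filter_mono nhdsWithin_le_nhds
  have h4 : ∀ᶠ t in 𝓝[>] (0:ℝ), t ∈ Set.Ioi (0:ℝ) := self_mem_nhdsWithin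
  obtain ⟨ε, ⟨hεw, hεhalf⟩, hεpos⟩ := (h3.and h4).exists
  rw [Set.mem_Ioi] at hεpos
  -- Step 2: positivity propagates to [ε, 1]
  have main : ∀ t ∈ Set.Icc ε 1, ∀ w : weylGroup D, 0 < u w t := by
    by_contra hcon
    push_neg at hcon
    obtain ⟨t₀, ht₀, w₀', hw₀'⟩ := hcon
    set S : Set ℝ := {t | t ∈ Set.Icc ε 1 ∧ ∃ w : weylGroup D, u w t ≤ 0} with hS
    have hSclosed : IsClosed S := by
      have hSeq : S = Set.Icc ε 1 ∩ ⋃ w : weylGroup D, {t | u w t ≤ 0} := by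
        ext t
        simp only [hS, Set.mem_setOf_eq, Set.mem_inter_iff, Set.mem_iUnion]
      rw [hSeq]
      exact isClosed_Icc.inter
        (isClosed_iUnion_of_finite fun w => isClosed_le (hcont w) continuous_const)
    have hSne : S.Nonempty := ⟨t₀, ht₀, w₀', hw₀'⟩
    have hSbdd : BddBelow S := ⟨ε, fun s hs => hs.1.1⟩
    set t₁ := sInf S with ht₁
    have ht₁S : t₁ ∈ S := hSclosed.csInf_mem hSne hSbdd
    have ht₁Icc : t₁ ∈ Set.Icc ε 1 := ht₁S.1
    have hεt₁ : ε < t₁ := by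
      rcases lt_or_eq_of_le ht₁Icc.1 with h | h
      · exact h
      · exfalso
        obtain ⟨w, hw⟩ := ht₁S.2
        rw [← h] at hw
        exact absurd hw (not_le.mpr (hεw w))
    have hlt : ∀ s, ε ≤ s → s < t₁ → ∀ w : weylGroup D, 0 < u w s := by
      intro s hs1 hs2 w
      by_contra hc
      push_neg at hc
      have : s ∈ S := ⟨⟨hs1, le_trans hs2.le ht₁Icc.2⟩, w, hc⟩
      exact absurd (csInf_le hSbdd this) (not_le.mpr hs2)
    have hnonneg : ∀ s ∈ Set.Icc ε t₁, ∀ w : weylGroup D, 0 ≤ u w s := by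
      intro s hs w
      rcases lt_or_eq_of_le hs.2 with h | h
      · exact (hlt s hs.1 h w).le
      · rw [h]
        refine ge_of_tendsto (x := 𝓝[<] t₁)
          (((hcont w).continuousAt).mono_left nhdsWithin_le_nhds) ?_
        filter_upwards [Ioo_mem_nhdsLT_of_mem ⟨hεt₁, le_refl t₁⟩] with r hr
        exact (hlt r hr.1.le hr.2 w).le
    obtain ⟨w₀, hw₀⟩ := ht₁S.2
    set z := w₀.1 y with hz
    have hzreg : HORegular D z := hyW w₀
    -- the derivative of u w₀
    set d : ℝ → ℝ := fun s =>
      (∑ α ∈ D.Rpos, D.k α * ⟪α, z⟫ / (1 - Real.exp (-⟪α, s • z⟫)) *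
          (G (rRefl α (s • z)) - u w₀ s)) + ⟪rhoHO D + lam, z⟫ * u w₀ s with hd
    have hders : ∀ s : ℝ, 0 < s → HasDerivAt (u w₀) (d s) s := by
      intro s hs
      have hreg : HORegular D (s • z) := by
        intro α hα
        rw [real_inner_smul_right]
        exact mul_ne_zero (ne_of_gt hs) (hzreg α hα)
      have h1 : HasDerivAt (fun t : ℝ => t • z) z s := by
        simpa using (hasDerivAt_id s).smul_const z
      have h2 : HasDerivAt (fun t : ℝ => G (t • z)) (fderiv ℝ G (s • z) z) s :=
        HasFDerivAt.comp_hasDerivAt s ((hdG (s • z)).hasFDerivAt) h1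
      rw [hG.2.2 z (s • z) hreg] at h2
      exact h2
    -- bound on the coefficients
    set C : ℝ → ℝ := fun s =>
      (∑ α ∈ D.Rpos, |D.k α * ⟪α, z⟫ / (1 - Real.exp (-⟪α, s • z⟫))|)
        + |⟪rhoHO D + lam, z⟫| with hC
    have hne : ∀ (α : E), α ∈ D.R → ∀ s ∈ Set.Icc ε t₁, 1 - Real.exp (-⟪α, s • z⟫) ≠ 0 := by
      intro α hα s hs
      apply one_sub_exp_ne
      rw [real_inner_smul_right]
      exact mul_ne_zero (ne_of_gt (lt_of_lt_of_le hεpos hs.1)) (hzreg α hα)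
    have hCcont : ContinuousOn C (Set.Icc ε t₁) := by
      apply ContinuousOn.add ?_ continuousOn_const
      apply continuousOn_finset_sum
      intro α hα
      apply ContinuousOn.abs
      apply ContinuousOn.div continuousOn_const
      · have hic : Continuous fun s : ℝ => ⟪α, s • z⟫ :=
          Continuous.inner continuous_const (continuous_id.smul continuous_const)
        exact (continuous_const.sub (Real.continuous_exp.comp hic.neg)).continuousOn
      · intro s hs
        exact hne α (D.pos_subset hα) s hs
    obtain ⟨K, hK⟩ := isCompact_Icc.exists_bound_of_continuousOn hCcont
    have hKud : ∀ s ∈ Set.Icc ε t₁, 0 ≤ K * u w₀ s + d s := by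
      intro s hs
      have hspos : 0 < s := lt_of_lt_of_le hεpos hs.1
      have hbpos : ∀ α ∈ D.Rpos, 0 < D.k α * ⟪α, z⟫ / (1 - Real.exp (-⟪α, s • z⟫)) := by
        intro α hα
        have hαR := D.pos_subset hα
        have h5 : 0 < ⟪α, z⟫ / (1 - Real.exp (-(s * ⟪α, z⟫))) :=
          coeff_pos _ s (hzreg α hαR) hspos
        rw [real_inner_smul_right, mul_div_assoc]
        exact mul_pos (D.k_pos α hαR) h5
      have hGterm : ∀ α ∈ D.Rpos, 0 ≤ G (rRefl α (s • z)) := by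
        intro α hα
        have hαR := D.pos_subset hα
        have heq : rRefl α (s • z) = s • ((⟨sIso α, sIso_mem D hαR⟩ * w₀ : weylGroup D).1 y) := by
          rw [rRefl_smul]
          congr 1
          exact (sIso_apply α (w₀.1 y)).symm
        rw [heq]
        exact hnonneg s hs _
      have hu0 : 0 ≤ u w₀ s := hnonneg s hs w₀
      have hsum_ge : (∑ α ∈ D.Rpos, D.k α * ⟪α, z⟫ / (1 - Real.exp (-⟪α, s • z⟫)) * (0 - u w₀ s))
          ≤ ∑ α ∈ D.Rpos, D.k α * ⟪α, z⟫ / (1 - Real.exp (-⟪α, s • z⟫)) *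
              (G (rRefl α (s • z)) - u w₀ s) := by
        apply Finset.sum_le_sum
        intro α hα
        apply mul_le_mul_of_nonneg_left _ (hbpos α hα).le
        have := hGterm α hα
        linarith
      have hCK : (∑ α ∈ D.Rpos, |D.k α * ⟪α, z⟫ / (1 - Real.exp (-⟪α, s • z⟫))|)
          + |⟪rhoHO D + lam, z⟫| ≤ K := by
        have h7 := hK s hs
        rw [Real.norm_eq_abs] at h7
        exact le_trans (le_abs_self _) h7
      have habs : (∑ α ∈ D.Rpos, |D.k α * ⟪α, z⟫ / (1 - Real.exp (-⟪α, s • z⟫))|)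
          = ∑ α ∈ D.Rpos, D.k α * ⟪α, z⟫ / (1 - Real.exp (-⟪α, s • z⟫)) :=
        Finset.sum_congr rfl (fun α hα => abs_of_pos (hbpos α hα))
      rw [habs] at hCK
      have hfold : (∑ α ∈ D.Rpos, D.k α * ⟪α, z⟫ / (1 - Real.exp (-⟪α, s • z⟫)) * (0 - u w₀ s))
          = -((∑ α ∈ D.Rpos, D.k α * ⟪α, z⟫ / (1 - Real.exp (-⟪α, s • z⟫))) * u w₀ s) := by
        rw [Finset.sum_mul]
        rw [← Finset.sum_neg_distrib]
        apply Finset.sum_congr rfl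
        intro α _
        ring
      rw [hfold] at hsum_ge
      have h9 : 0 ≤ (K - (∑ α ∈ D.Rpos, D.k α * ⟪α, z⟫ / (1 - Real.exp (-⟪α, s • z⟫)))
          + ⟪rhoHO D + lam, z⟫) * u w₀ s := by
        apply mul_nonneg _ hu0
        have := neg_abs_le ⟪rhoHO D + lam, z⟫
        linarith
      have h10 : (K - (∑ α ∈ D.Rpos, D.k α * ⟪α, z⟫ / (1 - Real.exp (-⟪α, s • z⟫)))
          + ⟪rhoHO D + lam, z⟫) * u w₀ s
          = K * u w₀ s - (∑ α ∈ D.Rpos, D.k α * ⟪α, z⟫ / (1 - Real.exp (-⟪α, s • z⟫))) * u w₀ s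
            + ⟪rhoHO D + lam, z⟫ * u w₀ s := by ring
      rw [h10] at h9
      simp only [hd]
      linarith
    set h : ℝ → ℝ := fun s => Real.exp (K * s) * u w₀ s with hh
    have hhd : ∀ s : ℝ, 0 < s → HasDerivAt h
        (Real.exp (K * s) * (K * 1) * u w₀ s + Real.exp (K * s) * d s) s := by
      intro s hs
      exact (((hasDerivAt_id s).const_mul K).exp).mul (hders s hs)
    have hmono : MonotoneOn h (Set.Icc ε t₁) := by
      apply monotoneOn_of_deriv_nonneg (convex_Icc ε t₁)
      · exact ((Real.continuous_exp.comp (continuous_const.mul continuous_id)).mul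
          (hcont w₀)).continuousOn
      · intro s hs
        rw [interior_Icc] at hs
        exact ((hhd s (lt_trans hεpos hs.1)).differentiableAt).differentiableWithinAt
      · intro s hs
        rw [interior_Icc] at hs
        have hspos : 0 < s := lt_trans hεpos hs.1
        rw [(hhd s hspos).deriv]
        have h1 := hKud s ⟨hs.1.le, hs.2.le⟩
        have h2 := (Real.exp_pos (K * s)).le
        nlinarith [mul_nonneg h2 h1]
    have hle : h ε ≤ h t₁ := hmono ⟨le_refl ε, hεt₁.le⟩ ⟨hεt₁.le, le_refl t₁⟩ hεt₁.le
    have h5 : 0 < h ε := mul_pos (Real.exp_pos _) (hεw w₀)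
    have h6 : h t₁ ≤ 0 := mul_nonpos_iff.mpr (Or.inl ⟨(Real.exp_pos _).le, hw₀⟩)
    linarith
  have h1mem : (1:ℝ) ∈ Set.Icc ε 1 := ⟨by linarith, le_refl 1⟩
  have hfin := main 1 h1mem 1
  simpa [hu] using hfin

lemma G_nonneg (D : HOData E) [Fintype (weylGroup D)] (lam : E) (G : E → ℝ)
    (hG : IsOpdamR D lam G) (v : E) : 0 ≤ G v := by
  have hGc : Continuous G := (hG.1.contDiff (n := 1)).continuous
  have hsub : {x : E | HORegular D x} ⊆ {x : E | 0 ≤ G x} :=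
    fun x hx => (G_pos_regular D lam G hG hx).le
  have hcl : IsClosed {x : E | 0 ≤ G x} := isClosed_le continuous_const hGc
  exact closure_minimal hsub hcl ((dense_regular D) v)

lemma gradient_Fsym_eq (D : HOData E) [Fintype (weylGroup D)] (lam : E) (G : E → ℝ)
    (hG : IsOpdamR D lam G) (x : E) :
    gradient (Fsym D G) x = (Fintype.card (weylGroup D) : ℝ)⁻¹ •
        ∑ w : weylGroup D, G (w.1 x) • (w.1.symm (lam - rhoHO D)) := by
  have hGc : Continuous G := (hG.1.contDiff (n := 1)).continuous
  have hfun : (fun x => gradient (Fsym D G) x)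
      = fun x => (Fintype.card (weylGroup D) : ℝ)⁻¹ •
          ∑ w : weylGroup D, G (w.1 x) • (w.1.symm (lam - rhoHO D)) := by
    apply Continuous.ext_on (dense_regular D)
    · exact continuous_gradient_Fsym D G hG.1
    · apply Continuous.const_smul
      apply continuous_finset_sum
      intro w _
      exact (hGc.comp w.1.continuous).smul continuous_const
    · intro x hx
      exact gradient_eq_of_inner _ _ _ (fun ξ => fderiv_Fsym_regular D lam G hG hx ξ)
  exact congrFun hfun x

-- MORE AUX HERE

/-- for `λ ∈ a` and `x ∈ ā₊`,
`∇F_λ(x) = -|W|⁻¹ Σ_{w ∈ W} w⁻¹(ρ - λ) G_λ(wx)`, and consequently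
`|∇F_λ(x)| ≤ (|ρ| + |λ|) F_λ(x)`. -/
theorem statement5 (D : HOData E) [Fintype (weylGroup D)] (lam : E) (G : E → ℝ)
    (hG : IsOpdamR D lam G) (x : E) (hx : x ∈ closure (posChamber D)) :
    gradient (Fsym D G) x
      = -((Fintype.card (weylGroup D) : ℝ)⁻¹ •
          ∑ w : weylGroup D, G (w.1 x) • (w.1.symm (rhoHO D - lam)))
    ∧ ‖gradient (Fsym D G) x‖ ≤ (‖rhoHO D‖ + ‖lam‖) * Fsym D G x := by
  have hgrad := gradient_Fsym_eq D lam G hG x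
  have hnn : ∀ w : weylGroup D, 0 ≤ G (w.1 x) := fun w => G_nonneg D lam G hG _
  have hcard : (0:ℝ) ≤ (Fintype.card (weylGroup D) : ℝ)⁻¹ := by positivity
  constructor
  · rw [hgrad, ← smul_neg, ← Finset.sum_neg_distrib]
    congr 1
    apply Finset.sum_congr rfl
    intro w _
    rw [← smul_neg, ← map_neg, neg_sub]
  · rw [hgrad]
    have hnorm : ‖lam - rhoHO D‖ ≤ ‖rhoHO D‖ + ‖lam‖ := by
      have := norm_sub_le lam (rhoHO D)
      linarith
    calc ‖(Fintype.card (weylGroup D) : ℝ)⁻¹ •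
            ∑ w : weylGroup D, G (w.1 x) • (w.1.symm (lam - rhoHO D))‖
        = (Fintype.card (weylGroup D) : ℝ)⁻¹ *
            ‖∑ w : weylGroup D, G (w.1 x) • (w.1.symm (lam - rhoHO D))‖ := by
          rw [norm_smul, Real.norm_eq_abs, abs_of_nonneg hcard]
      _ ≤ (Fintype.card (weylGroup D) : ℝ)⁻¹ *
            ∑ w : weylGroup D, ‖G (w.1 x) • (w.1.symm (lam - rhoHO D))‖ :=
          mul_le_mul_of_nonneg_left (norm_sum_le _ _) hcard
      _ = (Fintype.card (weylGroup D) : ℝ)⁻¹ *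
            ∑ w : weylGroup D, G (w.1 x) * ‖lam - rhoHO D‖ := by
          congr 1
          apply Finset.sum_congr rfl
          intro w _
          rw [norm_smul, Real.norm_eq_abs, abs_of_nonneg (hnn w),
            LinearIsometryEquiv.norm_map]
      _ ≤ (Fintype.card (weylGroup D) : ℝ)⁻¹ *
            ∑ w : weylGroup D, G (w.1 x) * (‖rhoHO D‖ + ‖lam‖) := by
          apply mul_le_mul_of_nonneg_left _ hcard
          apply Finset.sum_le_sum
          intro w _
          exact mul_le_mul_of_nonneg_left hnorm (hnn w)
      _ = (‖rhoHO D‖ + ‖lam‖) * Fsym D G x := by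
          simp only [Fsym]
          rw [← Finset.sum_mul]
          ring
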